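/- Let K be a field, P ≥ 2 an integer, N := 2P − 1, and α ∈ K with α ≠ 0. Suppose τ : ℤ → K satisfies τ_n ≠ 0 for all n and satisfies the bilinear equation τ_{n+N+2}τ_n = γ_n·τ_{n+N+1}τ_{n+1} + α·τ_{n+N}τ_{n+2} for all n ∈ ℤ, with 2-periodic coefficient γ (γ_{n+2} = γ_n; write γ_0, γ_1 for its two values). Define u_n := τ_{n+3}τ_n/(τ_{n+2}τ_{n+1}), v^even_n := τ_{2n}/τ_{2n+2}, v^odd_n := τ_{2n+1}/τ_{2n+3}, and p^even_n := α·v^even_n/v^even_{n−P+1} + α⁻¹·(v^even_{n−P}/v^even_n − 1), with p^odd_n defined analogously from v^odd. Let L(p, v, ζ) := [[p + ζ, v], [−v⁻¹, 0]], M(u, v, ζ) := [[1 − α²·u·v⁻¹ − α·ζ, −α·u], [α·v⁻¹, 1]], and let G_n(ζ) := [[ζ + u_{2n+1} − κ, v^odd_n], [−(v^even_{n+1})⁻¹, −1]], where κ := α⁻¹·(1 − γ_0·γ_1). Then for all n ∈ ℤ and all ζ ∈ K, the intertwining relations L(p^even_n, v^even_n, ζ)·G_n(ζ) = G_{n−1}(ζ)·L(p^odd_n,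 v^odd_n, ζ) and M(v^even_n, v^even_{n−P+1}, ζ)·G_n(ζ) = G_{n−P}(ζ)·M(v^odd_n, v^odd_{n−P+1}, ζ) hold. -/

import Mathlib

/-- The Lax matrix `L(p, v, ζ)` of the discrete Toda lattice. -/
def laxL {K : Type*} [Field K] (p v ζ : K) : Matrix (Fin 2) (Fin 2) K :=
  !![p + ζ, v; -v⁻¹, 0]

/-- The Lax matrix `M(u, v, ζ)` (depending on the parameter `α`) of the discrete
Toda lattice. -/
def laxM {K : Type*} [Field K] (α u v ζ : K) : Matrix (Fin 2) (Fin 2) K :=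
  !![1 - α ^ 2 * u * v⁻¹ - α * ζ, -α * u; α * v⁻¹, 1]

set_option maxHeartbeats 4000000 in
lemma auxL {K : Type*} [Field K] (α ζ γ0 γ1 b0 b1 b2 b3 b4 b5 c0 c1 c2 c3 c4 c5 : K)
    (hα : α ≠ 0)
    (hb1 : b1 ≠ 0) (hb2 : b2 ≠ 0) (hb3 : b3 ≠ 0) (hb4 : b4 ≠ 0) (hb5 : b5 ≠ 0)
    (hc0 : c0 ≠ 0) (hc1 : c1 ≠ 0) (hc2 : c2 ≠ 0) (hc3 : c3 ≠ 0) (hc4 : c4 ≠ 0) (hc5 : c5 ≠ 0)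
    (e0 : c2 * b0 = γ0 * (c1 * b1) + α * (c0 * b2))
    (e1 : c3 * b1 = γ1 * (c2 * b2) + α * (c1 * b3))
    (e2 : c4 * b2 = γ0 * (c3 * b3) + α * (c2 * b4))
    (e3 : c5 * b3 = γ1 * (c4 * b4) + α * (c3 * b5)) :
    laxL (α * (c1 / c3) / (b2 / b4) + α⁻¹ * (b0 / b2 / (c1 / c3) - 1)) (c1 / c3) ζ *
      !![ζ + c5 * c2 / (c4 * c3) - α⁻¹ * (1 - γ0 * γ1), c2 / c4; -(c3 / c5)⁻¹, -1] =
    !![ζ + c3 * c0 / (c2 * c1) - α⁻¹ * (1 - γ0 * γ1), c0 / c2; -(c1 / c3)⁻¹, -1] *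
      laxL (α * (c2 / c4) / (b3 / b5) + α⁻¹ * (b1 / b3 / (c2 / c4) - 1)) (c2 / c4) ζ := by
  ext i j
  fin_cases i <;> fin_cases j <;>
    simp only [laxL, Matrix.mul_apply, Fin.sum_univ_two, Matrix.cons_val', Matrix.cons_val_zero,
      Matrix.cons_val_one, Matrix.head_cons, Matrix.empty_val', Matrix.cons_val_fin_one,
      Matrix.head_fin_const, Fin.isValue, Matrix.of_apply, Fin.zero_eta, Fin.mk_one]
  · field_simp
    linear_combination (α * ζ * b3 * c2 * c3^3 * c4 + α * b3 * c2^2 * c3^2 * c5 + γ0 * γ1 * b3 * c2 * c3^3 * c4 - b3 * c2 * c3^3 * c4) * e0 + (-α * ζ * b2 * c1 * c2 * c3 * c4^2 - α * b2 * c0 * c3^2 * c4^2 - γ0 * γ1 * b2 * c1 * c2 * c3 * c4^2 + b2 * c1 * c2 * c3 * c4^2 + α * ζ * γ0 * b3 * c1 * c2 * c3^2 * c4 + α * γ0 * b3 * c1 * c2^2 * c3 * c5 + γ0^2 * γ1 * b3 * c1 * c2 * c3^2 * c4 - γ0 * b3 * c1 * c2 * c3^2 * c4) * e1 + (-α^2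 * b3 * c1^2 * c2^2 * c5 - α * ζ * γ1 * b2 * c1 * c2^2 * c3 * c4 - α^2 * ζ * b3 * c1^2 * c2 * c3 * c4 - α * γ1 * b2 * c0 * c2 * c3^2 * c4 - γ0 * γ1^2 * b2 * c1 * c2^2 * c3 * c4 - α * γ0 * γ1 * b3 * c1^2 * c2 * c3 * c4 + γ1 * b2 * c1 * c2^2 * c3 * c4 + α * b3 * c1^2 * c2 * c3 * c4) * e2 + (-α * b2 * c1 * c2^3 * c3 + α^2 * ζ * b2 * c1 * c2^3 * c3 + α^2 * b2 * c0 * c2^2 * c3^2 + α * γ0 * γ1 * b2 * c1 * c2^3 * c3) * e3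
  · field_simp
    linear_combination (c2 * c3^2) * e0 + (γ0 * c1 * c2 * c3) * e1 + (-α * c1^2 * c2) * e2
  · field_simp
    linear_combination (c3 * c4^2) * e1 + (γ1 * c2 * c3 * c4) * e2 + (-α * c2^2 * c3) * e3
  · field_simp

set_option maxHeartbeats 4000000 in
lemma auxM {K : Type*} [Field K] (α ζ γ0 γ1 b0 b1 b2 b3 b4 b5 c0 c1 c2 c3 c4 c5 : K)
    (hα : α ≠ 0)
    (hb1 : b1 ≠ 0) (hb2 : b2 ≠ 0) (hb3 : b3 ≠ 0) (hb4 : b4 ≠ 0) (hb5 : b5 ≠ 0)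
    (hc0 : c0 ≠ 0) (hc1 : c1 ≠ 0) (hc2 : c2 ≠ 0) (hc3 : c3 ≠ 0) (hc4 : c4 ≠ 0) (hc5 : c5 ≠ 0)
    (e0 : c2 * b0 = γ0 * (c1 * b1) + α * (c0 * b2))
    (e1 : c3 * b1 = γ1 * (c2 * b2) + α * (c1 * b3))
    (e2 : c4 * b2 = γ0 * (c3 * b3) + α * (c2 * b4))
    (e3 : c5 * b3 = γ1 * (c4 * b4) + α * (c3 * b5)) :
    laxM α (c1 / c3) (b2 / b4) ζ *
      !![ζ + c5 * c2 / (c4 * c3) - α⁻¹ * (1 - γ0 * γ1), c2 / c4; -(c3 / c5)⁻¹, -1] =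
    !![ζ + b4 * b1 / (b3 * b2) - α⁻¹ * (1 - γ0 * γ1), b1 / b3; -(b2 / b4)⁻¹, -1] *
      laxM α (c2 / c4) (b3 / b5) ζ := by
  ext i j
  fin_cases i <;> fin_cases j <;>
    simp only [laxM, Matrix.mul_apply, Fin.sum_univ_two, Matrix.cons_val', Matrix.cons_val_zero,
      Matrix.cons_val_one, Matrix.head_cons, Matrix.empty_val', Matrix.cons_val_fin_one,
      Matrix.head_fin_const, Fin.isValue, Matrix.of_apply, Fin.zero_eta, Fin.mk_one]
  · field_simp
    linear_combination (-α * b3 * b4 * c3 * c4 + α^3 * b4 * b5 * c2 * c3 + α^2 * ζ * b3 * b4 * c3 * c4 - α^2 * b2 * b5 * c3 * c4) * e1 + (α^2 * b3^2 * c1 * c5 - α^2 * γ1 * b2 * b5 * c2 * c3 - α^3 * b3 * b5 * c1 * c3) * e2 + (α * b2 * b3 * c2 * c3 - α^2 * ζ * b2 * b3 * c2 * c3 + α^2 * γ0 * b3^2 * c1 * c3) * e3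
  · field_simp
    linear_combination (α * b4 * c2 - b2 * c4) * e1 + (-γ1 * b2 * c2) * e2
  · field_simp
    linear_combination (-b3 * c5 + α * b5 * c3) * e2 + (-γ0 * b3 * c3) * e3
  · field_simp

/-- for odd `N = 2P - 1`, the gauge matrix `G_n(ζ)` intertwines the
even/odd reduced Toda Lax matrices:
`L^even_n G_n = G_{n-1} L^odd_n` and `M^even_n G_n = G_{n-P} M^odd_n`. -/
theorem gauge_intertwines_even_odd_lax {K : Type*} [Field K] (P : ℕ) (hP : 2 ≤ P)
    (α : K) (hα : α ≠ 0)
    (N : ℕ) (hNP : N = 2 * P - 1)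
    (τ : ℤ → K) (hτ : ∀ n, τ n ≠ 0)
    (γ : ℤ → K) (hper : ∀ n : ℤ, γ (n + 2) = γ n)
    (hbil : ∀ n : ℤ, τ (n + N + 2) * τ n =
      γ n * (τ (n + N + 1) * τ (n + 1)) + α * (τ (n + N) * τ (n + 2)))
    (u : ℤ → K) (hu : ∀ n : ℤ, u n = τ (n + 3) * τ n / (τ (n + 2) * τ (n + 1)))
    (veven vodd : ℤ → K)
    (hve : ∀ n : ℤ, veven n = τ (2 * n) / τ (2 * n + 2))
    (hvo : ∀ n : ℤ, vodd n = τ (2 * n + 1) / τ (2 * n + 3))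
    (peven podd : ℤ → K)
    (hpe : ∀ n : ℤ, peven n =
      α * veven n / veven (n - P + 1) + α⁻¹ * (veven (n - P) / veven n - 1))
    (hpo : ∀ n : ℤ, podd n =
      α * vodd n / vodd (n - P + 1) + α⁻¹ * (vodd (n - P) / vodd n - 1))
    (κ : K) (hκ : κ = α⁻¹ * (1 - γ 0 * γ 1))
    (G : ℤ → K → Matrix (Fin 2) (Fin 2) K)
    (hG : ∀ (n : ℤ) (ζ : K),
      G n ζ = !![ζ + u (2 * n + 1) - κ, vodd n; -(veven (n + 1))⁻¹, -1]) :
    ∀ (n : ℤ) (ζ : K),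
      laxL (peven n) (veven n) ζ * G n ζ = G (n - 1) ζ * laxL (podd n) (vodd n) ζ ∧
      laxM α (veven n) (veven (n - P + 1)) ζ * G n ζ =
        G (n - P) ζ * laxM α (vodd n) (vodd (n - P + 1)) ζ := by
  intro n ζ
  have hNZ : (N : ℤ) = 2 * (P : ℤ) - 1 := by omega
  have key : ∀ k : ℤ, ∀ j : ℤ, γ (j + 2 * k) = γ j := by
    intro k
    induction k using Int.induction_on with
    | zero => intro j; norm_num
    | succ m ih =>
      intro j
      rw [show j + 2 * ((m : ℤ) + 1) = (j + 2 * m) + 2 by ring, hper, ih]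
    | pred m ih =>
      intro j
      have h2 := hper (j + 2 * (-(m : ℤ)) - 2)
      rw [show j + 2 * (-(m : ℤ)) - 2 + 2 = j + 2 * (-(m : ℤ)) by ring] at h2
      rw [show j + 2 * (-(m : ℤ) - 1) = j + 2 * (-(m : ℤ)) - 2 by ring, ← h2, ih]
  have g0a : γ (2 * n - 2 * (P : ℤ)) = γ 0 := by
    have h := key (n - (P : ℤ)) 0
    rwa [show (0 : ℤ) + 2 * (n - (P : ℤ)) = 2 * n - 2 * (P : ℤ) by ring] at h
  have g1a : γ (2 * n - 2 * (P : ℤ) + 1) = γ 1 := by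
    have h := key (n - (P : ℤ)) 1
    rwa [show (1 : ℤ) + 2 * (n - (P : ℤ)) = 2 * n - 2 * (P : ℤ) + 1 by ring] at h
  have g0b : γ (2 * n - 2 * (P : ℤ) + 2) = γ 0 := by
    have h := key (n - (P : ℤ) + 1) 0
    rwa [show (0 : ℤ) + 2 * (n - (P : ℤ) + 1) = 2 * n - 2 * (P : ℤ) + 2 by ring] at h
  have g1b : γ (2 * n - 2 * (P : ℤ) + 3) = γ 1 := by
    have h := key (n - (P : ℤ) + 1) 1
    rwa [show (1 : ℤ) + 2 * (n - (P : ℤ) + 1) = 2 * n - 2 * (P : ℤ) + 3 by ring] at h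
  have E0 : τ (2 * n + 1) * τ (2 * n - 2 * (P : ℤ)) =
      γ 0 * (τ (2 * n) * τ (2 * n - 2 * (P : ℤ) + 1)) +
        α * (τ (2 * n - 1) * τ (2 * n - 2 * (P : ℤ) + 2)) := by
    have h := hbil (2 * n - 2 * (P : ℤ))
    rw [hNZ, show 2 * n - 2 * (P : ℤ) + (2 * (P : ℤ) - 1) + 2 = 2 * n + 1 by ring,
      show 2 * n - 2 * (P : ℤ) + (2 * (P : ℤ) - 1) + 1 = 2 * n by ring,
      show 2 * n - 2 * (P : ℤ) + (2 * (P : ℤ) - 1) = 2 * n - 1 by ring, g0a] at h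
    exact h
  have E1 : τ (2 * n + 2) * τ (2 * n - 2 * (P : ℤ) + 1) =
      γ 1 * (τ (2 * n + 1) * τ (2 * n - 2 * (P : ℤ) + 2)) +
        α * (τ (2 * n) * τ (2 * n - 2 * (P : ℤ) + 3)) := by
    have h := hbil (2 * n - 2 * (P : ℤ) + 1)
    rw [hNZ, show 2 * n - 2 * (P : ℤ) + 1 + (2 * (P : ℤ) - 1) + 2 = 2 * n + 2 by ring,
      show 2 * n - 2 * (P : ℤ) + 1 + (2 * (P : ℤ) - 1) + 1 = 2 * n + 1 by ring,
      show 2 * n - 2 * (P : ℤ) + 1 + (2 * (P : ℤ) - 1) = 2 * n by ring,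
      show 2 * n - 2 * (P : ℤ) + 1 + 1 = 2 * n - 2 * (P : ℤ) + 2 by ring,
      show 2 * n - 2 * (P : ℤ) + 1 + 2 = 2 * n - 2 * (P : ℤ) + 3 by ring, g1a] at h
    exact h
  have E2 : τ (2 * n + 3) * τ (2 * n - 2 * (P : ℤ) + 2) =
      γ 0 * (τ (2 * n + 2) * τ (2 * n - 2 * (P : ℤ) + 3)) +
        α * (τ (2 * n + 1) * τ (2 * n - 2 * (P : ℤ) + 4)) := by
    have h := hbil (2 * n - 2 * (P : ℤ) + 2)
    rw [hNZ, show 2 * n - 2 * (P : ℤ) + 2 + (2 * (P : ℤ) - 1) + 2 = 2 * n + 3 by ring,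
      show 2 * n - 2 * (P : ℤ) + 2 + (2 * (P : ℤ) - 1) + 1 = 2 * n + 2 by ring,
      show 2 * n - 2 * (P : ℤ) + 2 + (2 * (P : ℤ) - 1) = 2 * n + 1 by ring,
      show 2 * n - 2 * (P : ℤ) + 2 + 1 = 2 * n - 2 * (P : ℤ) + 3 by ring,
      show 2 * n - 2 * (P : ℤ) + 2 + 2 = 2 * n - 2 * (P : ℤ) + 4 by ring, g0b] at h
    exact h
  have E3 : τ (2 * n + 4) * τ (2 * n - 2 * (P : ℤ) + 3) =
      γ 1 * (τ (2 * n + 3) * τ (2 * n - 2 * (P : ℤ) + 4)) +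
        α * (τ (2 * n + 2) * τ (2 * n - 2 * (P : ℤ) + 5)) := by
    have h := hbil (2 * n - 2 * (P : ℤ) + 3)
    rw [hNZ, show 2 * n - 2 * (P : ℤ) + 3 + (2 * (P : ℤ) - 1) + 2 = 2 * n + 4 by ring,
      show 2 * n - 2 * (P : ℤ) + 3 + (2 * (P : ℤ) - 1) + 1 = 2 * n + 3 by ring,
      show 2 * n - 2 * (P : ℤ) + 3 + (2 * (P : ℤ) - 1) = 2 * n + 2 by ring,
      show 2 * n - 2 * (P : ℤ) + 3 + 1 = 2 * n - 2 * (P : ℤ) + 4 by ring,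
      show 2 * n - 2 * (P : ℤ) + 3 + 2 = 2 * n - 2 * (P : ℤ) + 5 by ring, g1b] at h
    exact h
  have Hu1 : u (2 * n + 1) = τ (2 * n + 4) * τ (2 * n + 1) / (τ (2 * n + 3) * τ (2 * n + 2)) := by
    rw [hu, show 2 * n + 1 + 3 = 2 * n + 4 by ring, show 2 * n + 1 + 2 = 2 * n + 3 by ring,
      show 2 * n + 1 + 1 = 2 * n + 2 by ring]
  have Hu0 : u (2 * (n - 1) + 1) = τ (2 * n + 2) * τ (2 * n - 1) / (τ (2 * n + 1) * τ (2 * n)) := by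
    rw [hu, show 2 * (n - 1) + 1 + 3 = 2 * n + 2 by ring,
      show 2 * (n - 1) + 1 + 2 = 2 * n + 1 by ring,
      show 2 * (n - 1) + 1 + 1 = 2 * n by ring, show 2 * (n - 1) + 1 = 2 * n - 1 by ring]
  have HuP : u (2 * (n - (P : ℤ)) + 1) = τ (2 * n - 2 * (P : ℤ) + 4) * τ (2 * n - 2 * (P : ℤ) + 1) /
      (τ (2 * n - 2 * (P : ℤ) + 3) * τ (2 * n - 2 * (P : ℤ) + 2)) := by
    rw [hu, show 2 * (n - (P : ℤ)) + 1 + 3 = 2 * n - 2 * (P : ℤ) + 4 by ring,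
      show 2 * (n - (P : ℤ)) + 1 + 2 = 2 * n - 2 * (P : ℤ) + 3 by ring,
      show 2 * (n - (P : ℤ)) + 1 + 1 = 2 * n - 2 * (P : ℤ) + 2 by ring,
      show 2 * (n - (P : ℤ)) + 1 = 2 * n - 2 * (P : ℤ) + 1 by ring]
  have Hv1 : veven (n + 1) = τ (2 * n + 2) / τ (2 * n + 4) := by
    rw [hve, show 2 * (n + 1) + 2 = 2 * n + 4 by ring, show 2 * (n + 1) = 2 * n + 2 by ring]
  have Hv1' : veven (n - 1 + 1) = τ (2 * n) / τ (2 * n + 2) := by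
    rw [hve, show 2 * (n - 1 + 1) + 2 = 2 * n + 2 by ring, show 2 * (n - 1 + 1) = 2 * n by ring]
  have HvP1 : veven (n - (P : ℤ) + 1) = τ (2 * n - 2 * (P : ℤ) + 2) / τ (2 * n - 2 * (P : ℤ) + 4) := by
    rw [hve, show 2 * (n - (P : ℤ) + 1) + 2 = 2 * n - 2 * (P : ℤ) + 4 by ring,
      show 2 * (n - (P : ℤ) + 1) = 2 * n - 2 * (P : ℤ) + 2 by ring]
  have HvP : veven (n - (P : ℤ)) = τ (2 * n - 2 * (P : ℤ)) / τ (2 * n - 2 * (P : ℤ) + 2) := by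
    rw [hve, show 2 * (n - (P : ℤ)) + 2 = 2 * n - 2 * (P : ℤ) + 2 by ring,
      show 2 * (n - (P : ℤ)) = 2 * n - 2 * (P : ℤ) by ring]
  have Hw1 : vodd (n - 1) = τ (2 * n - 1) / τ (2 * n + 1) := by
    rw [hvo, show 2 * (n - 1) + 3 = 2 * n + 1 by ring, show 2 * (n - 1) + 1 = 2 * n - 1 by ring]
  have HwP : vodd (n - (P : ℤ)) = τ (2 * n - 2 * (P : ℤ) + 1) / τ (2 * n - 2 * (P : ℤ) + 3) := by
    rw [hvo, show 2 * (n - (P : ℤ)) + 3 = 2 * n - 2 * (P : ℤ) + 3 by ring,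
      show 2 * (n - (P : ℤ)) + 1 = 2 * n - 2 * (P : ℤ) + 1 by ring]
  have HwP1 : vodd (n - (P : ℤ) + 1) = τ (2 * n - 2 * (P : ℤ) + 3) / τ (2 * n - 2 * (P : ℤ) + 5) := by
    rw [hvo, show 2 * (n - (P : ℤ) + 1) + 3 = 2 * n - 2 * (P : ℤ) + 5 by ring,
      show 2 * (n - (P : ℤ) + 1) + 1 = 2 * n - 2 * (P : ℤ) + 3 by ring]
  rw [hG n ζ, hG (n - 1) ζ, hG (n - (P : ℤ)) ζ, hpe n, hpo n, hκ, Hu1, Hu0, HuP, Hv1, Hv1', HvP1,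
    HvP, hve n, Hw1, HwP, HwP1, hvo n]
  exact ⟨auxL α ζ (γ 0) (γ 1) (τ (2 * n - 2 * (P : ℤ))) (τ (2 * n - 2 * (P : ℤ) + 1))
      (τ (2 * n - 2 * (P : ℤ) + 2)) (τ (2 * n - 2 * (P : ℤ) + 3)) (τ (2 * n - 2 * (P : ℤ) + 4))
      (τ (2 * n - 2 * (P : ℤ) + 5)) (τ (2 * n - 1)) (τ (2 * n)) (τ (2 * n + 1)) (τ (2 * n + 2))
      (τ (2 * n + 3)) (τ (2 * n + 4)) hα (hτ _) (hτ _) (hτ _) (hτ _) (hτ _) (hτ _) (hτ _) (hτ _)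
      (hτ _) (hτ _) (hτ _) E0 E1 E2 E3,
    auxM α ζ (γ 0) (γ 1) (τ (2 * n - 2 * (P : ℤ))) (τ (2 * n - 2 * (P : ℤ) + 1))
      (τ (2 * n - 2 * (P : ℤ) + 2)) (τ (2 * n - 2 * (P : ℤ) + 3)) (τ (2 * n - 2 * (P : ℤ) + 4))
      (τ (2 * n - 2 * (P : ℤ) + 5)) (τ (2 * n - 1)) (τ (2 * n)) (τ (2 * n + 1)) (τ (2 * n + 2))
      (τ (2 * n + 3)) (τ (2 * n + 4)) hα (hτ _) (hτ _) (hτ _) (hτ _) (hτ _) (hτ _) (hτ _) (hτ _)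
      (hτ _) (hτ _) (hτ _) E0 E1 E2 E3⟩
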